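/- Let E = ℝ^d with the Euclidean norm, let W ⊆ ℝ^d be nonempty compact convex, let σ > 0, and let f_1,…,f_T : W → ℝ be σ-strongly convex. Let w_1,…,w_T ∈ W, let g_t be a subgradient of f_t at w_t, and let P be the passed rounds of the Top-k Filter with parameter k applied to g_1,…,g_T. Fix S ⊆ [T] with T − |S| ≤ k and u ∈ W, let g_t^u be a subgradient of f_t at u for each t, and set G̃(u,S) = 2G(S) + max{‖g_t^u‖_2 : t ∈ [T], ‖g_t‖_2 ≤ 2G(S)}. Suppose the predictions satisfy the online gradient descent guarantee for strongly convex losses on the passed rounds: Σ_{t∈P} ⟨w_t − u, g_t⟩ ≤ (1/2)·Σ_{t∈P} ‖g_t‖_2²/(σt) + (σ/2)·Σ_{t∈P} ‖w_t − u‖_2². Then the robust regret satisfies Σ_{t∈S} (f_t(w_t) − f_t(u)) ≤ (2G(S)²/σ)·(ln T + 1) + (5·G̃(u,S)²/(2σ))·(k+1). -/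

import Mathlib

/-!
Top-k Filter in Euclidean space: rounds are indexed `0, 1, …, T-1`.  For round `t`,
`topkThresh g k t` is the `(k+1)`-th largest value among `‖g 0‖₂, …, ‖g t‖₂`
(`0` if fewer than `k+1` values are available).  Round `t` is passed iff
`‖g t‖₂ ≤ 2 * topkThresh g k t`.
-/

/-- The `(k+1)`-th largest element of a list of reals (`0` if the list has fewer
than `k+1` elements). -/
noncomputable def kthLargest (k : ℕ) (l : List ℝ) : ℝ :=
  (l.mergeSort (fun a b => decide (b ≤ a))).getD k 0

/-- `m_t`: the `(k+1)`-th largest value among `‖g 0‖₂, …, ‖g t‖₂`. -/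
noncomputable def topkThresh {d : ℕ} (g : ℕ → EuclideanSpace ℝ (Fin d)) (k t : ℕ) : ℝ :=
  kthLargest k ((List.range (t + 1)).map fun s => ‖g s‖)

/-- The set of rounds in `{0, …, T-1}` passed on to ALG by the Top-k Filter. -/
noncomputable def topkPassed {d : ℕ} (g : ℕ → EuclideanSpace ℝ (Fin d)) (k T : ℕ) :
    Finset ℕ :=
  (Finset.range T).filter fun t => ‖g t‖ ≤ 2 * topkThresh g k t

/-- `G(S) = max_{t ∈ S} ‖g t‖₂` (with `G(∅) = 0`). -/
noncomputable def gradMax {d : ℕ} (g : ℕ → EuclideanSpace ℝ (Fin d)) (S : Finset ℕ) : ℝ :=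
  ((S.sup fun t => ‖g t‖₊ : NNReal) : ℝ)



lemma countP_list_range (n : ℕ) (p : ℕ → Prop) [DecidablePred p] :
    (List.range n).countP (fun s => decide (p s)) = ((Finset.range n).filter p).card := by
  induction n with
  | zero => simp
  | succ n ih =>
    rw [List.range_succ, List.countP_append, Finset.range_add_one, Finset.filter_insert]
    by_cases h : p n
    · rw [if_pos h, Finset.card_insert_of_notMem (by simp)]
      simp [h, ih]
    · simp [h, ih]

lemma sorted_kth (l : List ℝ) :
    (l.mergeSort (fun a b => decide (b ≤ a))).Pairwise (fun a b => b ≤ a) := by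
  have := List.pairwise_mergeSort (le := fun a b : ℝ => decide (b ≤ a))
    (by intro a b c h1 h2; simp_all; linarith)
    (by intro a b; simpa using le_total b a) l
  simpa using this

lemma kthLargest_nonneg (k : ℕ) (l : List ℝ) (h : ∀ x ∈ l, 0 ≤ x) :
    0 ≤ kthLargest k l := by
  unfold kthLargest
  set sl := l.mergeSort (fun a b => decide (b ≤ a)) with hsl
  by_cases hk : k < sl.length
  · rw [List.getD_eq_getElem _ _ hk]
    exact h _ ((List.mergeSort_perm l _).mem_iff.mp (List.getElem_mem hk))
  · rw [List.getD_eq_default _ _ (le_of_not_gt hk)]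

lemma kthLargest_le (k : ℕ) (l : List ℝ) (B : ℝ) (hB : 0 ≤ B)
    (h : l.countP (fun x => decide (B < x)) ≤ k) : kthLargest k l ≤ B := by
  unfold kthLargest
  set sl := l.mergeSort (fun a b => decide (b ≤ a)) with hsl
  by_cases hk : k < sl.length
  · rw [List.getD_eq_getElem _ _ hk]
    by_contra hgt
    push_neg at hgt
    have hsort := sorted_kth l
    rw [List.pairwise_iff_getElem, ← hsl] at hsort
    have hcount : k + 1 ≤ sl.countP (fun x => decide (B < x)) := by
      have htake : (sl.take (k+1)).countP (fun x => decide (B < x)) = (sl.take (k+1)).length := by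
        rw [List.countP_eq_length]
        intro a ha
        obtain ⟨i, hi, rfl⟩ := List.mem_take_iff_getElem.mp ha
        simp only [decide_eq_true_eq]
        rcases lt_or_eq_of_le (Nat.lt_succ_iff.mp (lt_min_iff.mp hi).1) with hlt | heq
        · exact lt_of_lt_of_le hgt (hsort i k (lt_of_lt_of_le hlt (le_of_lt hk)) hk hlt)
        · subst heq; exact hgt
      have hlen : (sl.take (k+1)).length = k + 1 := by
        rw [List.length_take]; omega
      calc k + 1 = (sl.take (k+1)).countP (fun x => decide (B < x)) := by rw [htake, hlen]
        _ ≤ sl.countP (fun x => decide (B < x)) := by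
            conv_rhs => rw [← List.take_append_drop (k+1) sl]
            rw [List.countP_append]; omega
    have := (List.mergeSort_perm l (fun a b => decide (b ≤ a))).countP_eq (fun x => decide (B < x))
    rw [← hsl] at this
    omega
  · rw [List.getD_eq_default _ _ (le_of_not_gt hk)]; exact hB

lemma kthLargest_ge (k : ℕ) (l : List ℝ) (v : ℝ)
    (h : k + 1 ≤ l.countP (fun x => decide (v ≤ x))) : v ≤ kthLargest k l := by
  unfold kthLargest
  set sl := l.mergeSort (fun a b => decide (b ≤ a)) with hsl
  have hperm := List.mergeSort_perm l (fun a b => decide (b ≤ a))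
  have hclsl : sl.countP (fun x => decide (v ≤ x)) = l.countP (fun x => decide (v ≤ x)) := by
    rw [hsl]; exact hperm.countP_eq _
  have hlen : k < sl.length := by
    have := List.countP_le_length (p := fun x => decide (v ≤ x)) (l := sl)
    omega
  rw [List.getD_eq_getElem _ _ hlen]
  by_contra hlt
  push_neg at hlt
  have hsort := sorted_kth l
  rw [List.pairwise_iff_getElem, ← hsl] at hsort
  -- all entries at index ≥ k are < v
  have hdrop : (sl.drop k).countP (fun x => decide (v ≤ x)) = 0 := by
    rw [List.countP_eq_zero]
    intro a ha
    obtain ⟨i, hi, rfl⟩ := List.mem_drop_iff_getElem.mp (by exact_mod_cast ha)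
    simp only [decide_eq_true_eq, not_le]
    rcases Nat.eq_zero_or_pos i with rfl | hpos
    · simpa using hlt
    · exact lt_of_le_of_lt (hsort k (k+i) hlen (by omega) (by omega)) hlt
  have : sl.countP (fun x => decide (v ≤ x)) ≤ k := by
    conv_lhs => rw [← List.take_append_drop k sl]
    rw [List.countP_append, hdrop]
    have := List.countP_le_length (p := fun x => decide (v ≤ x)) (l := sl.take k)
    rw [List.length_take] at this
    omega
  omega

lemma level_bounds (G v : ℝ) (hv : 0 < v) (hvG : v ≤ G) :
    v ≤ G / 2 ^ Nat.log 2 ⌊G / v⌋₊ ∧ G / 2 ^ (Nat.log 2 ⌊G / v⌋₊ + 1) < v := by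
  set n := ⌊G / v⌋₊ with hn
  set i := Nat.log 2 n with hi
  have hG : 0 < G := lt_of_lt_of_le hv hvG
  have hn1 : 1 ≤ n := (Nat.one_le_floor_iff _).mpr ((one_le_div hv).mpr hvG)
  have h2i : (2:ℝ) ^ i ≤ G / v := by
    calc ((2:ℝ)) ^ i = ((2 ^ i : ℕ) : ℝ) := by push_cast; ring
    _ ≤ (n : ℝ) := by exact_mod_cast Nat.pow_log_le_self 2 (by omega)
    _ ≤ G / v := Nat.floor_le (by positivity)
  have h2i' : G / v < (2:ℝ) ^ (i + 1) := by
    calc G / v < (n : ℝ) + 1 := Nat.lt_floor_add_one _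
    _ ≤ ((2 ^ (i+1) : ℕ) : ℝ) := by
        exact_mod_cast Nat.succ_le_of_lt (Nat.lt_pow_succ_log_self (by norm_num) n)
    _ = (2:ℝ) ^ (i+1) := by push_cast; ring
  constructor
  · rw [le_div_iff₀ (by positivity)]
    calc v * 2 ^ i ≤ v * (G / v) := by
          exact mul_le_mul_of_nonneg_left h2i (le_of_lt hv)
    _ = G := by field_simp
  · rw [div_lt_iff₀ (by positivity)]
    calc G = v * (G / v) := by field_simp
    _ < v * 2 ^ (i+1) := by exact mul_lt_mul_of_pos_left h2i' hv

lemma geom_finset_le (F : Finset ℕ) : ∑ i ∈ F, ((1:ℝ)/4) ^ i ≤ 4/3 := by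
  have hsum : Summable (fun i : ℕ => ((1:ℝ)/4) ^ i) :=
    summable_geometric_of_lt_one (by norm_num) (by norm_num)
  have h1 := hsum.sum_le_tsum F (fun i _ => by positivity)
  rw [tsum_geometric_of_lt_one (by norm_num) (by norm_num)] at h1
  norm_num at h1 ⊢
  linarith

lemma rejected_sq_sum {d : ℕ} (g : ℕ → EuclideanSpace ℝ (Fin d)) (k : ℕ) (G : ℝ)
    (R : Finset ℕ)
    (hR : ∀ t ∈ R, 2 * topkThresh g k t < ‖g t‖ ∧ ‖g t‖ ≤ G) :
    ∑ t ∈ R, ‖g t‖ ^ 2 ≤ 4/3 * (k + 1) * G ^ 2 := by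
  -- each rejected round has positive gradient norm
  have hthresh_nonneg : ∀ t, 0 ≤ topkThresh g k t := by
    intro t
    apply kthLargest_nonneg
    intro x hx
    obtain ⟨s, _, rfl⟩ := List.mem_map.mp hx
    positivity
  have hvpos : ∀ t ∈ R, 0 < ‖g t‖ := by
    intro t ht
    have := (hR t ht).1
    have := hthresh_nonneg t
    linarith
  rcases R.eq_empty_or_nonempty with rfl | hRne
  · simp; positivity
  have hGpos : 0 < G := by
    obtain ⟨t0, ht0⟩ := hRne
    exact lt_of_lt_of_le (hvpos t0 ht0) (hR t0 ht0).2
  set ℓ : ℕ → ℕ := fun t => Nat.log 2 ⌊G / ‖g t‖⌋₊ with hℓ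
  have hlev : ∀ t ∈ R, ‖g t‖ ≤ G / 2 ^ ℓ t ∧ G / 2 ^ (ℓ t + 1) < ‖g t‖ := by
    intro t ht
    exact level_bounds G ‖g t‖ (hvpos t ht) (hR t ht).2
  -- fiber cardinality bound
  have hfiber : ∀ i, (R.filter fun t => ℓ t = i).card ≤ k + 1 := by
    intro i
    by_contra hcard
    push_neg at hcard
    set F := R.filter fun t => ℓ t = i with hF
    have hFne : F.Nonempty := Finset.card_pos.mp (by omega)
    set t := F.max' hFne with ht
    have htF : t ∈ F := F.max'_mem hFne
    have htR : t ∈ R := (Finset.mem_filter.mp htF).1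
    have htℓ : ℓ t = i := (Finset.mem_filter.mp htF).2
    -- count of rounds ≤ t with big norms
    have hsubset : F ⊆ (Finset.range (t+1)).filter fun s => G / 2 ^ (i+1) ≤ ‖g s‖ := by
      intro s hs
      rw [Finset.mem_filter]
      refine ⟨Finset.mem_range.mpr (Nat.lt_succ_of_le (F.le_max' s hs)), ?_⟩
      have hsR := (Finset.mem_filter.mp hs).1
      have hsℓ := (Finset.mem_filter.mp hs).2
      have := (hlev s hsR).2
      rw [hsℓ] at this
      linarith
    have hcount : k + 1 ≤ ((Finset.range (t+1)).filter fun s => G / 2 ^ (i+1) ≤ ‖g s‖).card := by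
      have := Finset.card_le_card hsubset
      omega
    have hm : G / 2 ^ (i+1) ≤ topkThresh g k t := by
      apply kthLargest_ge
      rw [List.countP_map]
      have : (List.countP ((fun x => decide (G / 2 ^ (i+1) ≤ x)) ∘ fun s => ‖g s‖)
          (List.range (t+1))) =
          ((Finset.range (t+1)).filter fun s => G / 2 ^ (i+1) ≤ ‖g s‖).card := by
        exact countP_list_range (t+1) _
      omega
    have h2 := (hR t htR).1
    have h3 := (hlev t htR).1
    rw [htℓ] at h3
    have hpow : (2:ℝ) ^ (i+1) = 2 * 2 ^ i := by ring
    have : G / 2 ^ i = 2 * (G / 2 ^ (i+1)) := by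
      rw [hpow]; field_simp
    linarith
  -- now sum over fibers
  have hstep : ∑ t ∈ R, ‖g t‖ ^ 2 ≤ ∑ t ∈ R, G ^ 2 * (1/4 : ℝ) ^ (ℓ t) := by
    apply Finset.sum_le_sum
    intro t ht
    have h1 := (hlev t ht).1
    have hval : G ^ 2 * (1/4 : ℝ) ^ (ℓ t) = (G / 2 ^ ℓ t) ^ 2 := by
      rw [div_pow, div_pow, ← pow_mul, mul_comm (ℓ t) 2, pow_mul]
      norm_num [div_eq_mul_inv]
    rw [hval]
    have := hvpos t ht
    nlinarith
  have hfibersum : ∑ t ∈ R, G ^ 2 * (1/4 : ℝ) ^ (ℓ t) =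
      ∑ i ∈ R.image ℓ, ∑ t ∈ R.filter fun t => ℓ t = i, G ^ 2 * (1/4 : ℝ) ^ (ℓ t) := by
    rw [Finset.sum_fiberwise_eq_sum_filter]
    rw [Finset.filter_true_of_mem (fun t ht => Finset.mem_image_of_mem ℓ ht)]
  have hbound : ∑ i ∈ R.image ℓ, ∑ t ∈ R.filter fun t => ℓ t = i, G ^ 2 * (1/4 : ℝ) ^ (ℓ t)
      ≤ ∑ i ∈ R.image ℓ, ((k:ℝ) + 1) * (G ^ 2 * (1/4 : ℝ) ^ i) := by
    apply Finset.sum_le_sum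
    intro i _
    have : ∑ t ∈ R.filter fun t => ℓ t = i, G ^ 2 * (1/4 : ℝ) ^ (ℓ t) =
        ((R.filter fun t => ℓ t = i).card : ℝ) * (G ^ 2 * (1/4 : ℝ) ^ i) := by
      rw [Finset.sum_congr rfl (fun t ht => by rw [(Finset.mem_filter.mp ht).2]),
        Finset.sum_const, nsmul_eq_mul]
    rw [this]
    apply mul_le_mul_of_nonneg_right _ (by positivity)
    exact_mod_cast hfiber i
  have hgeom : ∑ i ∈ R.image ℓ, ((k:ℝ) + 1) * (G ^ 2 * (1/4 : ℝ) ^ i) ≤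
      ((k:ℝ) + 1) * G ^ 2 * (4/3) := by
    rw [← Finset.mul_sum, ← Finset.mul_sum]
    calc ((k:ℝ)+1) * (G^2 * ∑ i ∈ R.image ℓ, ((1:ℝ)/4)^i)
        = (((k:ℝ)+1) * G^2) * ∑ i ∈ R.image ℓ, ((1:ℝ)/4)^i := by ring
      _ ≤ (((k:ℝ)+1) * G^2) * (4/3) :=
          mul_le_mul_of_nonneg_left (geom_finset_le (R.image ℓ)) (by positivity)
      _ = ((k:ℝ)+1) * G^2 * (4/3) := by ring
  calc ∑ t ∈ R, ‖g t‖ ^ 2 ≤ ∑ t ∈ R, G ^ 2 * (1/4 : ℝ) ^ (ℓ t) := hstep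
    _ ≤ ((k:ℝ) + 1) * G ^ 2 * (4/3) := by rw [hfibersum]; exact le_trans hbound hgeom
    _ = 4/3 * (k + 1) * G ^ 2 := by ring

lemma harmonic_le_log (T : ℕ) :
    ∑ t ∈ Finset.range T, (1 : ℝ) / (t + 1) ≤ Real.log T + 1 := by
  induction T with
  | zero => simp
  | succ n ih =>
    rw [Finset.sum_range_succ]
    rcases Nat.eq_zero_or_pos n with rfl | hn
    · simp
    · have hn' : (0:ℝ) < n := by exact_mod_cast hn
      have key : Real.log n + 1 / (n + 1) ≤ Real.log (n + 1) := by
        have h1 : Real.log ((n:ℝ) / (n + 1)) ≤ (n:ℝ) / (n+1) - 1 :=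
          Real.log_le_sub_one_of_pos (by positivity)
        rw [Real.log_div (by positivity) (by positivity)] at h1
        have : (n:ℝ)/(n+1) - 1 = -(1/(n+1)) := by field_simp; ring
        rw [this] at h1
        linarith
      have : ((n:ℕ)+1 : ℝ) = ((n+1 : ℕ) : ℝ) := by push_cast; ring
      push_cast
      linarith



lemma amgm_div (σ a b : ℝ) (hσ : 0 < σ) : a * b - σ/2 * a^2 ≤ b^2 / (2*σ) := by
  rw [le_div_iff₀ (by linarith)]
  nlinarith [sq_nonneg (σ*a - b)]


set_option maxHeartbeats 2000000 in
/-- Corollary 2, Strongly Convex Losses. -/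
theorem topk_filter_strongly_convex
    {d : ℕ} (W : Set (EuclideanSpace ℝ (Fin d)))
    (hWne : W.Nonempty) (hWcomp : IsCompact W) (hWconv : Convex ℝ W)
    (T k : ℕ) (hT : 1 ≤ T) (σ : ℝ) (hσ : 0 < σ)
    (f : ℕ → EuclideanSpace ℝ (Fin d) → ℝ)
    (hstrong : ∀ t ∈ Finset.range T, StrongConvexOn W σ (f t))
    (w : ℕ → EuclideanSpace ℝ (Fin d)) (hw : ∀ t ∈ Finset.range T, w t ∈ W)
    (g : ℕ → EuclideanSpace ℝ (Fin d))
    -- `g t` is a subgradient of the σ-strongly convex `f t` at `w t`: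
    (hsubw : ∀ t ∈ Finset.range T, ∀ y ∈ W,
      f t (w t) + (inner ℝ (y - w t) (g t) : ℝ) + σ / 2 * ‖y - w t‖ ^ 2 ≤ f t y)
    (S : Finset ℕ) (hS : S ⊆ Finset.range T) (hSk : T - S.card ≤ k)
    (u : EuclideanSpace ℝ (Fin d)) (hu : u ∈ W)
    -- `gu t` is a subgradient of `f t` at `u`:
    (gu : ℕ → EuclideanSpace ℝ (Fin d))
    (hsubu : ∀ t ∈ Finset.range T, ∀ y ∈ W,
      f t u + (inner ℝ (y - u) (gu t) : ℝ) + σ / 2 * ‖y - u‖ ^ 2 ≤ f t y)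
    -- OGD guarantee with step sizes `1/(σ t)` on the passed rounds:
    (hOGD : ∑ t ∈ topkPassed g k T, (inner ℝ (w t - u) (g t) : ℝ) ≤
      1 / 2 * ∑ t ∈ topkPassed g k T, ‖g t‖ ^ 2 / (σ * (t + 1))
        + σ / 2 * ∑ t ∈ topkPassed g k T, ‖w t - u‖ ^ 2) :
    ∑ t ∈ S, (f t (w t) - f t u) ≤
      2 * gradMax g S ^ 2 / σ * (Real.log T + 1)
        + 5 * (2 * gradMax g S
            + ((((Finset.range T).filter fun t => ‖g t‖ ≤ 2 * gradMax g S).sup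
                fun t => ‖gu t‖₊ : NNReal) : ℝ)) ^ 2 / (2 * σ) * (k + 1) := by
  set G : ℝ := gradMax g S with hG
  set M : ℝ := ((((Finset.range T).filter fun t => ‖g t‖ ≤ 2 * G).sup
    fun t => ‖gu t‖₊ : NNReal) : ℝ) with hM
  set P : Finset ℕ := topkPassed g k T with hP
  have hGnn : 0 ≤ G := NNReal.coe_nonneg _
  have hMnn : 0 ≤ M := NNReal.coe_nonneg _
  have hGS : ∀ t ∈ S, ‖g t‖ ≤ G := by
    intro t ht
    rw [hG, gradMax, ← coe_nnnorm]
    exact_mod_cast Finset.le_sup (f := fun t => ‖g t‖₊) ht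
  have hMgu : ∀ t ∈ Finset.range T, ‖g t‖ ≤ 2 * G → ‖gu t‖ ≤ M := by
    intro t ht hgt
    rw [hM, ← coe_nnnorm]
    exact_mod_cast Finset.le_sup (f := fun t => ‖gu t‖₊)
      (Finset.mem_filter.mpr ⟨ht, hgt⟩)
  -- card of complement
  have hcompl : (Finset.range T \ S).card ≤ k := by
    rw [Finset.card_sdiff_of_subset hS, Finset.card_range]; exact hSk
  -- threshold bound
  have hthresh_le : ∀ t ∈ Finset.range T, topkThresh g k t ≤ G := by
    intro t ht
    apply kthLargest_le _ _ G hGnn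
    rw [List.countP_map]
    have hcount : (List.countP ((fun x => decide (G < x)) ∘ fun s => ‖g s‖)
        (List.range (t+1))) = ((Finset.range (t+1)).filter fun s => G < ‖g s‖).card :=
      countP_list_range (t+1) _
    rw [hcount]
    refine le_trans (Finset.card_le_card ?_) hcompl
    intro s hs
    rw [Finset.mem_filter] at hs
    rw [Finset.mem_sdiff]
    have hsT : s < T := lt_of_lt_of_le (Finset.mem_range.mp hs.1) (Finset.mem_range.mp ht)
    refine ⟨Finset.mem_range.mpr hsT, fun hsS => ?_⟩
    exact absurd (hGS s hsS) (not_le.mpr hs.2)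
  have hPsub : P ⊆ Finset.range T := Finset.filter_subset _ _
  have hPg : ∀ t ∈ P, ‖g t‖ ≤ 2 * G := by
    intro t ht
    have h1 := (Finset.mem_filter.mp ht).2
    have h2 := hthresh_le t (hPsub ht)
    linarith
  -- subgradient inequalities
  have h1 : ∀ t ∈ Finset.range T,
      f t (w t) - f t u ≤ (inner ℝ (w t - u) (g t) : ℝ) - σ/2 * ‖w t - u‖^2 := by
    intro t ht
    have := hsubw t ht u hu
    have hin : (inner ℝ (u - w t) (g t) : ℝ) = -(inner ℝ (w t - u) (g t) : ℝ) := by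
      rw [← neg_sub, inner_neg_left]
    have hnr : ‖u - w t‖ = ‖w t - u‖ := norm_sub_rev _ _
    rw [hin, hnr] at this
    linarith
  have h2 : ∀ t ∈ Finset.range T,
      (inner ℝ (w t - u) (gu t) : ℝ) + σ/2 * ‖w t - u‖^2 ≤ f t (w t) - f t u := by
    intro t ht
    have := hsubu t ht (w t) (hw t ht)
    linarith
  -- term bound on passed-not-in-S rounds
  have h3 : ∀ t ∈ Finset.range T,
      σ/2 * ‖w t - u‖^2 - (inner ℝ (w t - u) (g t) : ℝ) ≤ ‖gu t‖^2 / (2*σ) := by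
    intro t ht
    have ha := h1 t ht
    have hb := h2 t ht
    have hcs : -(‖w t - u‖ * ‖gu t‖) ≤ (inner ℝ (w t - u) (gu t) : ℝ) := by
      have := real_inner_le_norm (u - w t) (gu t)
      have hin : (inner ℝ (u - w t) (gu t) : ℝ) = -(inner ℝ (w t - u) (gu t) : ℝ) := by
        rw [← neg_sub, inner_neg_left]
      rw [hin, norm_sub_rev] at this
      linarith
    refine le_trans ?_ (amgm_div σ ‖w t - u‖ ‖gu t‖ hσ)
    linarith
  -- term bound on rejected rounds
  have h4 : ∀ t ∈ Finset.range T,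
      f t (w t) - f t u ≤ ‖g t‖^2 / (2*σ) := by
    intro t ht
    have ha := h1 t ht
    have hcs := real_inner_le_norm (w t - u) (g t)
    refine le_trans ?_ (amgm_div σ ‖w t - u‖ ‖g t‖ hσ)
    linarith
  -- split the sum
  rw [← Finset.sum_inter_add_sum_sdiff S P (fun t => f t (w t) - f t u)]
  -- Part 1: S ∩ P
  have part1 : ∑ t ∈ S ∩ P, (f t (w t) - f t u) ≤
      2 * G^2 / σ * (Real.log T + 1) + k * (M^2 / (2*σ)) := by
    have step1 : ∑ t ∈ S ∩ P, (f t (w t) - f t u) ≤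
        ∑ t ∈ S ∩ P, ((inner ℝ (w t - u) (g t) : ℝ) - σ/2 * ‖w t - u‖^2) := by
      apply Finset.sum_le_sum
      intro t ht
      exact h1 t (hS (Finset.mem_inter.mp ht).1)
    have split : ∑ t ∈ S ∩ P, ((inner ℝ (w t - u) (g t) : ℝ) - σ/2 * ‖w t - u‖^2)
        = ∑ t ∈ P, ((inner ℝ (w t - u) (g t) : ℝ) - σ/2 * ‖w t - u‖^2)
          - ∑ t ∈ P \ S, ((inner ℝ (w t - u) (g t) : ℝ) - σ/2 * ‖w t - u‖^2) := by
      rw [← Finset.sum_inter_add_sum_sdiff P S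
        (fun t => (inner ℝ (w t - u) (g t) : ℝ) - σ/2 * ‖w t - u‖^2), Finset.inter_comm]
      ring
    have hOGD' : ∑ t ∈ P, ((inner ℝ (w t - u) (g t) : ℝ) - σ/2 * ‖w t - u‖^2) ≤
        1/2 * ∑ t ∈ P, ‖g t‖^2 / (σ * (t + 1)) := by
      rw [Finset.sum_sub_distrib, ← Finset.mul_sum]
      linarith [hOGD]
    have hlog : 1/2 * ∑ t ∈ P, ‖g t‖^2 / (σ * (t + 1)) ≤
        2 * G^2 / σ * (Real.log T + 1) := by
      have e1 : ∑ t ∈ P, ‖g t‖^2 / (σ * (t + 1)) ≤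
          ∑ t ∈ P, (4 * G^2 / σ) * (1 / ((t:ℝ) + 1)) := by
        apply Finset.sum_le_sum
        intro t ht
        have hg2 : ‖g t‖^2 ≤ 4 * G^2 := by nlinarith [hPg t ht, norm_nonneg (g t)]
        have htp : (0:ℝ) < (t:ℝ) + 1 := by positivity
        rw [div_mul_div_comm, mul_one]
        gcongr
      have e2 : ∑ t ∈ P, (4 * G^2 / σ) * (1 / ((t:ℝ) + 1)) ≤
          ∑ t ∈ Finset.range T, (4 * G^2 / σ) * (1 / ((t:ℝ) + 1)) := by
        apply Finset.sum_le_sum_of_subset_of_nonneg hPsub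
        intro t _ _
        positivity
      have e3 : ∑ t ∈ Finset.range T, (4 * G^2 / σ) * (1 / ((t:ℝ) + 1)) ≤
          (4 * G^2 / σ) * (Real.log T + 1) := by
        rw [← Finset.mul_sum]
        apply mul_le_mul_of_nonneg_left (harmonic_le_log T) (by positivity)
      have heq : (2:ℝ) * G^2 / σ * (Real.log T + 1) = 1/2 * (4 * G^2 / σ * (Real.log T + 1)) := by
        ring
      rw [heq]
      linarith
    have hrest : - ∑ t ∈ P \ S, ((inner ℝ (w t - u) (g t) : ℝ) - σ/2 * ‖w t - u‖^2) ≤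
        k * (M^2 / (2*σ)) := by
      have e1 : - ∑ t ∈ P \ S, ((inner ℝ (w t - u) (g t) : ℝ) - σ/2 * ‖w t - u‖^2)
          = ∑ t ∈ P \ S, (σ/2 * ‖w t - u‖^2 - (inner ℝ (w t - u) (g t) : ℝ)) := by
        rw [← Finset.sum_neg_distrib]
        apply Finset.sum_congr rfl
        intro t _; ring
      rw [e1]
      have e2 : ∑ t ∈ P \ S, (σ/2 * ‖w t - u‖^2 - (inner ℝ (w t - u) (g t) : ℝ)) ≤
          ∑ t ∈ P \ S, M^2 / (2*σ) := by
        apply Finset.sum_le_sum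
        intro t ht
        have htT : t ∈ Finset.range T := hPsub (Finset.mem_sdiff.mp ht).1
        have hguM : ‖gu t‖ ≤ M := hMgu t htT (hPg t (Finset.mem_sdiff.mp ht).1)
        refine le_trans (h3 t htT) ?_
        gcongr
      rw [Finset.sum_const, nsmul_eq_mul] at e2
      have hcard : ((P \ S).card : ℝ) ≤ k := by
        have hsub : P \ S ⊆ Finset.range T \ S := Finset.sdiff_subset_sdiff hPsub le_rfl
        have := le_trans (Finset.card_le_card hsub) hcompl
        exact_mod_cast this
      have hMσ : 0 ≤ M^2 / (2*σ) := by positivity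
      nlinarith
    calc ∑ t ∈ S ∩ P, (f t (w t) - f t u)
        ≤ ∑ t ∈ P, ((inner ℝ (w t - u) (g t) : ℝ) - σ/2 * ‖w t - u‖^2)
          - ∑ t ∈ P \ S, ((inner ℝ (w t - u) (g t) : ℝ) - σ/2 * ‖w t - u‖^2) := by
          rw [← split]; exact step1
      _ ≤ 2 * G^2 / σ * (Real.log T + 1) + k * (M^2 / (2*σ)) := by linarith
  -- Part 2: S \ P
  have part2 : ∑ t ∈ S \ P, (f t (w t) - f t u) ≤ (4/3 * (k+1) * G^2) / (2*σ) := by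
    have step1 : ∑ t ∈ S \ P, (f t (w t) - f t u) ≤ ∑ t ∈ S \ P, ‖g t‖^2 / (2*σ) := by
      apply Finset.sum_le_sum
      intro t ht
      exact h4 t (hS (Finset.mem_sdiff.mp ht).1)
    have step2 : ∑ t ∈ S \ P, ‖g t‖^2 / (2*σ) = (∑ t ∈ S \ P, ‖g t‖^2) / (2*σ) := by
      rw [Finset.sum_div]
    have step3 : ∑ t ∈ S \ P, ‖g t‖^2 ≤ 4/3 * (k+1) * G^2 := by
      apply rejected_sq_sum g k G
      intro t ht
      obtain ⟨htS, htnP⟩ := Finset.mem_sdiff.mp ht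
      constructor
      · have htT : t ∈ Finset.range T := hS htS
        by_contra hle
        push_neg at hle
        exact htnP (Finset.mem_filter.mpr ⟨htT, hle⟩)
      · exact hGS t htS
    rw [step2] at step1
    refine le_trans step1 ?_
    gcongr
  -- Combine
  have hfinal : k * (M^2 / (2*σ)) + (4/3 * (k+1) * G^2) / (2*σ) ≤
      5 * (2 * G + M)^2 / (2*σ) * (k+1) := by
    have hQ : (0:ℝ) ≤ (2*G + M)^2 := sq_nonneg _
    have hM2 : M^2 ≤ (2*G + M)^2 := by nlinarith [hGnn, hMnn, mul_nonneg hGnn hMnn]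
    have hG2 : 4 * G^2 ≤ (2*G + M)^2 := by nlinarith [hGnn, hMnn, mul_nonneg hGnn hMnn]
    have hknn : (0:ℝ) ≤ (k:ℝ) := Nat.cast_nonneg k
    have hnum : (k:ℝ) * M^2 + 4/3 * ((k:ℝ)+1) * G^2 ≤ 5 * (2*G+M)^2 * ((k:ℝ)+1) := by
      have e1 : (k:ℝ) * M^2 ≤ (k:ℝ) * (2*G+M)^2 := mul_le_mul_of_nonneg_left hM2 hknn
      have e2 : ((k:ℝ)+1) * (4*G^2) ≤ ((k:ℝ)+1) * (2*G+M)^2 :=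
        mul_le_mul_of_nonneg_left hG2 (by positivity)
      have e3 : 0 ≤ (k:ℝ) * (2*G+M)^2 := mul_nonneg hknn hQ
      nlinarith [e1, e2, e3, hQ]
    have h2σ : (0:ℝ) < 2*σ := by linarith
    calc (k:ℝ) * (M^2 / (2*σ)) + (4/3 * ((k:ℝ)+1) * G^2) / (2*σ)
        = ((k:ℝ) * M^2 + 4/3 * ((k:ℝ)+1) * G^2) / (2*σ) := by ring
      _ ≤ (5 * (2*G+M)^2 * ((k:ℝ)+1)) / (2*σ) := by
          exact (div_le_div_iff_of_pos_right h2σ).mpr hnum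
      _ = 5 * (2*G+M)^2 / (2*σ) * ((k:ℝ)+1) := by ring
  linarith
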